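/- If X is a subspace of a countably compact Hausdorff space Y, then every infinite subset I ⊆ X contains an infinite subset D ⊆ I that is strictly discrete in X, i.e., each point d ∈ D has an open neighborhood O_d in X such that the family (O_d)_{d ∈ D} is pairwise disjoint. -/

import Mathlib

open Filter Topology

/-- If `X` is a subspace of a countably compact Hausdorff space `Y`, then
every infinite `I ⊆ X` contains an infinite subset `D` that is strictly
discrete in `X`: the points of `D` admit pairwise disjoint open
neighborhoods. -/
theorem stmt3 {Y : Type*} [TopologicalSpace Y] [T2Space Y]
    (hcc : ∀ S : Set Y, S.Infinite → ∃ y : Y, AccPt y (𝓟 S))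
    (s : Set Y) :
    ∀ I : Set s, I.Infinite → ∃ D ⊆ I, D.Infinite ∧
      ∃ O : s → Set s, (∀ d ∈ D, IsOpen (O d) ∧ d ∈ O d) ∧
        D.PairwiseDisjoint O := by
  intro I hI
  classical
  set S : Set Y := Subtype.val '' I with hSdef
  have hSinf : S.Infinite := hI.image (Set.injOn_of_injective Subtype.val_injective)
  obtain ⟨y, hy⟩ := hcc S hSinf
  have hacc := accPt_iff_nhds.mp hy
  -- one step of the recursion
  have step : ∀ t : {q : Y × Set Y × Set Y // IsOpen q.2.2 ∧ y ∈ q.2.2},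
      ∃ t' : {q : Y × Set Y × Set Y // IsOpen q.2.2 ∧ y ∈ q.2.2},
        t'.1.1 ∈ S ∧ t'.1.1 ∈ t'.1.2.1 ∧ IsOpen t'.1.2.1 ∧
        Disjoint t'.1.2.1 t'.1.2.2 ∧ t'.1.2.1 ⊆ t.1.2.2 ∧ t'.1.2.2 ⊆ t.1.2.2 := by
    rintro ⟨⟨d0, U0, V0⟩, hVo, hyV⟩
    obtain ⟨z, ⟨hzV, hzS⟩, hzy⟩ := hacc V0 (hVo.mem_nhds hyV)
    obtain ⟨U1, V1, hU1, hV1, hzU1, hyV1, hUV⟩ := t2_separation hzy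
    refine ⟨⟨⟨z, U1 ∩ V0, V1 ∩ V0⟩, hV1.inter hVo, ⟨hyV1, hyV⟩⟩,
      hzS, ⟨hzU1, hzV⟩, hU1.inter hVo, ?_,
      Set.inter_subset_right, Set.inter_subset_right⟩
    exact (Set.disjoint_of_subset Set.inter_subset_left Set.inter_subset_left hUV)
  choose next hnext using step
  set t0 : {q : Y × Set Y × Set Y // IsOpen q.2.2 ∧ y ∈ q.2.2} :=
    ⟨⟨y, ∅, Set.univ⟩, isOpen_univ, trivial⟩ with ht0
  set seq : ℕ → {q : Y × Set Y × Set Y // IsOpen q.2.2 ∧ y ∈ q.2.2} :=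
    fun n => next^[n + 1] t0 with hseq
  have hseq_succ : ∀ n, seq (n + 1) = next (seq n) := fun n => by
    simp [hseq, Function.iterate_succ_apply']
  have hseq_eq : ∀ n, seq n = next (next^[n] t0) := fun n => by
    simp [hseq, Function.iterate_succ_apply']
  have hinv : ∀ n, (seq n).1.1 ∈ S ∧ (seq n).1.1 ∈ (seq n).1.2.1 ∧
      IsOpen (seq n).1.2.1 ∧ Disjoint (seq n).1.2.1 (seq n).1.2.2 := fun n => by
    rw [hseq_eq n]
    exact ⟨(hnext _).1, (hnext _).2.1, (hnext _).2.2.1, (hnext _).2.2.2.1⟩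
  have hsub : ∀ n, (seq (n + 1)).1.2.1 ⊆ (seq n).1.2.2 ∧
      (seq (n + 1)).1.2.2 ⊆ (seq n).1.2.2 := fun n => by
    rw [hseq_succ n]
    exact ⟨(hnext _).2.2.2.2.1, (hnext _).2.2.2.2.2⟩
  have hVmono : ∀ n m, n ≤ m → (seq m).1.2.2 ⊆ (seq n).1.2.2 := by
    intro n m h
    induction m, h using Nat.le_induction with
    | base => exact subset_rfl
    | succ m hm ih => exact ((hsub m).2).trans ih
  have hUdisj : ∀ n m, n < m → Disjoint (seq n).1.2.1 (seq m).1.2.1 := by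
    intro n m h
    obtain ⟨k, rfl⟩ := Nat.exists_eq_add_of_lt h
    exact ((hinv n).2.2.2).mono_right
      (((hsub (n + k)).1).trans (hVmono n (n + k) (Nat.le_add_right _ _)))
  have hUdisj' : ∀ n m, n ≠ m → Disjoint (seq n).1.2.1 (seq m).1.2.1 := by
    intro n m h
    rcases h.lt_or_gt with h' | h'
    · exact hUdisj n m h'
    · exact (hUdisj m n h').symm
  have dinj : Function.Injective (fun n => (seq n).1.1) := by
    intro n m h
    simp only at h
    by_contra hne
    have hm := (hinv m).2.1
    rw [← h] at hm
    exact Set.disjoint_left.mp (hUdisj' n m hne) ((hinv n).2.1) hm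
  have he : ∀ n, ∃ x : s, x ∈ I ∧ (x : Y) = (seq n).1.1 := by
    intro n
    obtain ⟨x, hxI, hx⟩ := (hinv n).1
    exact ⟨x, hxI, hx⟩
  choose e heI heval using he
  have einj : Function.Injective e := by
    intro n m h
    apply dinj
    simp only
    rw [← heval n, ← heval m, h]
  set O : s → Set s := fun x =>
    if h : ∃ n, e n = x then Subtype.val ⁻¹' (seq (Classical.choose h)).1.2.1
    else ∅ with hO
  refine ⟨Set.range e, ?_, Set.infinite_range_of_injective einj, O, ?_, ?_⟩
  · rintro _ ⟨n, rfl⟩; exact heI n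
  · rintro x ⟨n, rfl⟩
    have h : ∃ m, e m = e n := ⟨n, rfl⟩
    simp only [hO, dif_pos h]
    refine ⟨((hinv _).2.2.1).preimage continuous_subtype_val, ?_⟩
    have hsp : e (Classical.choose h) = e n := Classical.choose_spec h
    show (e n : Y) ∈ (seq (Classical.choose h)).1.2.1
    have hval : ((e n : s) : Y) = (e (Classical.choose h) : Y) := by rw [hsp]
    rw [hval, heval]
    exact (hinv _).2.1
  · rintro x ⟨n, rfl⟩ x' ⟨m, rfl⟩ hne
    have h1 : ∃ k, e k = e n := ⟨n, rfl⟩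
    have h2 : ∃ k, e k = e m := ⟨m, rfl⟩
    have hkk : Classical.choose h1 ≠ Classical.choose h2 := by
      intro hc
      apply hne
      rw [← Classical.choose_spec h1, ← Classical.choose_spec h2, hc]
    simp only [Function.onFun, hO, dif_pos h1, dif_pos h2]
    exact (hUdisj' _ _ hkk).preimage _
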